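/- Suppose γ is a line and suppose there exist ε > 0 and C¹ curves c₁, c₂ : [t₀−ε, t₀+ε] → M with c₁(t₀−ε) = ξ(t₀−ε), c₁(t₀+ε) = η(t₀+ε), c₂(t₀−ε) = η(t₀−ε), c₂(t₀+ε) = ξ(t₀+ε), and L(c₁) + L(c₂) < 4ε, where ξ, η are lines with B_γ ∘ ξ ≡ 0, B_γ ∘ η ≡ 0, and all forward/backward subrays of ξ, η are corays to γ⁺, γ⁻ respectively (i.e., b_{γ⁺} and b_{γ⁻} are calibrated along them). Then B_γ(c₁(t₀)) + B_γ(c₂(t₀)) < 0, contradicting B_γ ≥ 0. Hence no such shortening curves exist. -/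
import Mathlib

lemma edist_pair_le_var {M : Type*} [MetricSpace M] (f : ℝ → M) {a b c : ℝ}
    (hab : a ≤ b) (hbc : b ≤ c) :
    edist (f a) (f b) + edist (f b) (f c) ≤ eVariationOn f (Set.Icc a c) := by
  have h1 : Set.Icc a c ∩ Set.Icc a b = Set.Icc a b := by
    rw [Set.Icc_inter_Icc]
    simp [max_self, min_eq_right hbc]
  have h2 : Set.Icc a c ∩ Set.Icc b c = Set.Icc b c := by
    rw [Set.Icc_inter_Icc]
    simp [min_self, max_eq_right hab]
  have key := eVariationOn.Icc_add_Icc f (s := Set.Icc a c) hab hbc ⟨hab, hbc⟩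
  rw [h1, h2, Set.Icc_inter_Icc, max_self, min_self] at key
  calc edist (f a) (f b) + edist (f b) (f c)
      ≤ eVariationOn f (Set.Icc a b) + eVariationOn f (Set.Icc b c) := by
        gcongr
        · exact eVariationOn.edist_le f ⟨le_refl a, hab⟩ ⟨hab, le_refl b⟩
        · exact eVariationOn.edist_le f ⟨le_refl b, hbc⟩ ⟨hbc, le_refl c⟩
    _ = eVariationOn f (Set.Icc a c) := key


/-- A line: `d(γ t₁, γ t₂) = |t₂ - t₁|` for all `t₁, t₂ ∈ ℝ`. -/
def IsLine {M : Type*} [MetricSpace M] (γ : ℝ → M) : Prop :=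
  ∀ t₁ t₂ : ℝ, dist (γ t₁) (γ t₂) = |t₂ - t₁|

/-- Mather-type shortening contradiction.  Let `γ, ξ, η` be lines, with `ξ, η`
calibrated by `b_{γ⁺}` and `b_{γ⁻}` (so in particular `B_γ ∘ ξ ≡ 0` and
`B_γ ∘ η ≡ 0`).  If `c₁, c₂ : [t₀-ε, t₀+ε] → M` are curves with
`c₁(t₀-ε) = ξ(t₀-ε)`, `c₁(t₀+ε) = η(t₀+ε)`, `c₂(t₀-ε) = η(t₀-ε)`,
`c₂(t₀+ε) = ξ(t₀+ε)` and total length `L(c₁) + L(c₂) < 4ε` (length measured by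
the variation `eVariationOn`), then `B_γ(c₁ t₀) + B_γ(c₂ t₀) < 0`,
contradicting `B_γ ≥ 0`; hence no such shortening curves exist. -/
theorem shortening_contradiction {M : Type*} [MetricSpace M] [CompleteSpace M]
    (γ ξ η : ℝ → M) (hγ : IsLine γ) (hξ : IsLine ξ) (hη : IsLine η)
    (bp bm : M → ℝ)
    (hbp : ∀ x, Filter.Tendsto (fun t => dist x (γ t) - t) Filter.atTop (nhds (bp x)))
    (hbm : ∀ x, Filter.Tendsto (fun t => dist x (γ (-t)) - t) Filter.atTop (nhds (bm x)))
    (hξp : ∀ t₁ t₂ : ℝ, bp (ξ t₁) - bp (ξ t₂) = t₂ - t₁)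
    (hξm : ∀ t₁ t₂ : ℝ, bm (ξ t₁) - bm (ξ t₂) = t₁ - t₂)
    (hξ0 : ∀ t : ℝ, bp (ξ t) + bm (ξ t) = 0)
    (hηp : ∀ t₁ t₂ : ℝ, bp (η t₁) - bp (η t₂) = t₂ - t₁)
    (hηm : ∀ t₁ t₂ : ℝ, bm (η t₁) - bm (η t₂) = t₁ - t₂)
    (hη0 : ∀ t : ℝ, bp (η t) + bm (η t) = 0)
    (t₀ ε : ℝ) (hε : 0 < ε) (c₁ c₂ : ℝ → M)
    (hc₁l : c₁ (t₀ - ε) = ξ (t₀ - ε)) (hc₁r : c₁ (t₀ + ε) = η (t₀ + ε))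
    (hc₂l : c₂ (t₀ - ε) = η (t₀ - ε)) (hc₂r : c₂ (t₀ + ε) = ξ (t₀ + ε))
    (hlen : eVariationOn c₁ (Set.Icc (t₀ - ε) (t₀ + ε)) +
        eVariationOn c₂ (Set.Icc (t₀ - ε) (t₀ + ε)) < ENNReal.ofReal (4 * ε)) :
    (bp (c₁ t₀) + bm (c₁ t₀)) + (bp (c₂ t₀) + bm (c₂ t₀)) < 0 := by

  -- bp and bm are 1-Lipschitz
  have lip : ∀ (b : M → ℝ) (g : ℝ → M),
      (∀ x, Filter.Tendsto (fun t => dist x (g t) - t) Filter.atTop (nhds (b x))) →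
      ∀ x y, b x ≤ b y + dist x y := by
    intro b g hb x y
    have h := (hb x).sub (hb y)
    have hle : b x - b y ≤ dist x y := by
      refine le_of_tendsto h (Filter.Eventually.of_forall fun t => ?_)
      have := abs_dist_sub_le x y (g t)
      have := abs_le.mp this
      linarith [this.2]
    linarith
  have lbp : ∀ x y, bp x ≤ bp y + dist x y := lip bp γ hbp
  have lbm : ∀ x y, bm x ≤ bm y + dist x y := lip bm (fun t => γ (-t)) hbm
  -- split lengths
  have hab : t₀ - ε ≤ t₀ := by linarith
  have hbc : t₀ ≤ t₀ + ε := by linarith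
  have h1 := edist_pair_le_var c₁ hab hbc
  have h2 := edist_pair_le_var c₂ hab hbc
  have htot : edist (c₁ (t₀ - ε)) (c₁ t₀) + edist (c₁ t₀) (c₁ (t₀ + ε)) +
      (edist (c₂ (t₀ - ε)) (c₂ t₀) + edist (c₂ t₀) (c₂ (t₀ + ε))) <
      ENNReal.ofReal (4 * ε) := lt_of_le_of_lt (add_le_add h1 h2) hlen
  have hdist : dist (c₁ (t₀ - ε)) (c₁ t₀) + dist (c₁ t₀) (c₁ (t₀ + ε)) +
      (dist (c₂ (t₀ - ε)) (c₂ t₀) + dist (c₂ t₀) (c₂ (t₀ + ε))) < 4 * ε := by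
    have : edist (c₁ (t₀ - ε)) (c₁ t₀) + edist (c₁ t₀) (c₁ (t₀ + ε)) +
        (edist (c₂ (t₀ - ε)) (c₂ t₀) + edist (c₂ t₀) (c₂ (t₀ + ε))) =
        ENNReal.ofReal (dist (c₁ (t₀ - ε)) (c₁ t₀) + dist (c₁ t₀) (c₁ (t₀ + ε)) +
          (dist (c₂ (t₀ - ε)) (c₂ t₀) + dist (c₂ t₀) (c₂ (t₀ + ε)))) := by
      simp only [edist_dist]
      rw [← ENNReal.ofReal_add dist_nonneg dist_nonneg,
        ← ENNReal.ofReal_add dist_nonneg dist_nonneg,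
        ← ENNReal.ofReal_add (by positivity) (by positivity)]
    rw [this] at htot
    exact (ENNReal.ofReal_lt_ofReal_iff_of_nonneg (by positivity)).mp htot
  -- Lipschitz estimates to endpoints
  have e1 : bp (c₁ t₀) ≤ bp (η (t₀ + ε)) + dist (c₁ t₀) (c₁ (t₀ + ε)) := by
    rw [← hc₁r]; exact lbp _ _
  have e2 : bm (c₁ t₀) ≤ bm (ξ (t₀ - ε)) + dist (c₁ (t₀ - ε)) (c₁ t₀) := by
    rw [← hc₁l]; simpa [dist_comm] using lbm (c₁ t₀) (c₁ (t₀ - ε))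
  have e3 : bp (c₂ t₀) ≤ bp (ξ (t₀ + ε)) + dist (c₂ t₀) (c₂ (t₀ + ε)) := by
    rw [← hc₂r]; exact lbp _ _
  have e4 : bm (c₂ t₀) ≤ bm (η (t₀ - ε)) + dist (c₂ (t₀ - ε)) (c₂ t₀) := by
    rw [← hc₂l]; simpa [dist_comm] using lbm (c₂ t₀) (c₂ (t₀ - ε))
  -- calibration values
  have k1 := hηp (t₀ + ε) t₀
  have k2 := hξm (t₀ - ε) t₀
  have k3 := hξp (t₀ + ε) t₀
  have k4 := hηm (t₀ - ε) t₀
  have k5 := hξ0 t₀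
  have k6 := hη0 t₀
  linarith
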